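/- limsup over monic R in F_q[T] with deg R → ∞ of ω(R)·(log_q log_q |R|)/(log_q |R|) equals 1. In particular, for all monic R with deg R ≥ 4, ω(R) ≤ (log_q |R|)/(log_q log_q |R|) + O((log_q |R|)/(log_q log_q |R|)²). -/

import Mathlib

open Polynomial UniqueFactorizationMonoid
open scoped Classical

/-- `ω(R)`: the number of distinct monic prime divisors of `R`. -/
noncomputable def ffOmega {Fq : Type*} [Field Fq] (N : Polynomial Fq) : ℕ :=
  (normalizedFactors N).toFinset.card

open Finset

section AuxOmega

set_option linter.unusedSectionVars false

variable {Fq : Type*} [Field Fq] [Fintype Fq]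

lemma sum_sq_half (N : ℕ) :
    ∑ j ∈ Finset.range N, ((j : ℝ) + 1) ^ 2 * (1/2) ^ j
      = 12 - (2 * (N:ℝ) ^ 2 + 8 * (N:ℝ) + 12) * (1/2 : ℝ) ^ N := by
  induction N with
  | zero => norm_num
  | succ n ih =>
      rw [Finset.sum_range_succ, ih, pow_succ]
      push_cast
      ring

lemma sum_est {q : ℕ} (hq : 2 ≤ q) {m : ℕ} (hm : 1 ≤ m) :
    ∑ d ∈ Finset.Icc 1 m, ((m : ℝ) + 1 - d) * q ^ d / d ≤ 12 * q ^ m / m := by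
  have hq0 : (0:ℝ) < q := by positivity
  have hm0 : (0:ℝ) < m := by exact_mod_cast hm
  have step1 : ∀ d ∈ Finset.Icc 1 m,
      ((m : ℝ) + 1 - d) * q ^ d / d ≤ ((m : ℝ) + 1 - d) ^ 2 * q ^ d / m := by
    intro d hd
    rw [Finset.mem_Icc] at hd
    have hd1 : (1:ℝ) ≤ d := by exact_mod_cast hd.1
    have hdm : (d:ℝ) ≤ m := by exact_mod_cast hd.2
    have hd0 : (0:ℝ) < d := by linarith
    rw [div_le_div_iff₀ hd0 hm0]
    have e1 : (0:ℝ) ≤ (m:ℝ) + 1 - (d:ℝ) := by linarith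
    have e2 : (m:ℝ) ≤ ((m:ℝ) + 1 - d) * d := by nlinarith
    have e3 : (0:ℝ) ≤ ((m:ℝ) + 1 - d) * (q:ℝ)^d := by positivity
    calc ((m : ℝ) + 1 - d) * q ^ d * m ≤ ((m:ℝ) + 1 - d) * (q:ℝ)^d * (((m:ℝ) + 1 - d) * d) := by
          exact mul_le_mul_of_nonneg_left e2 e3
      _ = ((m : ℝ) + 1 - d) ^ 2 * q ^ d * d := by ring
  calc ∑ d ∈ Finset.Icc 1 m, ((m : ℝ) + 1 - d) * q ^ d / d
      ≤ ∑ d ∈ Finset.Icc 1 m, ((m : ℝ) + 1 - d) ^ 2 * q ^ d / m :=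
        Finset.sum_le_sum step1
    _ = (∑ d ∈ Finset.Icc 1 m, ((m : ℝ) + 1 - d) ^ 2 * q ^ d) / m := by
        rw [Finset.sum_div]
    _ ≤ (12 * q ^ m) / m := by
        gcongr
        have h1 : ∑ d ∈ Finset.Icc 1 m, ((m : ℝ) + 1 - d) ^ 2 * q ^ d
            = ∑ i ∈ Finset.range m, ((m : ℝ) - i) ^ 2 * q ^ (i+1) := by
          rw [← Finset.Ico_add_one_right_eq_Icc, Finset.sum_Ico_eq_sum_range]
          simp only [Nat.add_sub_cancel]
          apply Finset.sum_congr rfl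
          intro i _
          push_cast
          ring_nf
        have h2 : ∑ i ∈ Finset.range m, ((m : ℝ) - i) ^ 2 * q ^ (i+1)
            = ∑ i ∈ Finset.range m, ((i:ℝ) + 1) ^ 2 * q ^ (m - i) := by
          rw [← Finset.sum_range_reflect]
          apply Finset.sum_congr rfl
          intro i hi
          rw [Finset.mem_range] at hi
          have h3 : m - 1 - i + 1 = m - i := by omega
          have h4 : (↑(m - 1 - i) : ℝ) = (m:ℝ) - 1 - i := by
            push_cast [Nat.cast_sub (by omega : i ≤ m - 1), Nat.cast_sub (by omega : 1 ≤ m)]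
            ring
          rw [h3, h4]
          ring_nf
        rw [h1, h2]
        have h5 : ∀ i ∈ Finset.range m, ((i:ℝ) + 1) ^ 2 * q ^ (m - i)
            ≤ (q:ℝ)^m * (((i:ℝ) + 1) ^ 2 * (1/2) ^ i) := by
          intro i hi
          rw [Finset.mem_range] at hi
          have hle : (q:ℝ) ^ (m - i) * 2 ^ i ≤ (q:ℝ)^m := by
            have h2q : (2:ℝ)^i ≤ (q:ℝ)^i := by
              apply pow_le_pow_left₀ (by norm_num) (by exact_mod_cast hq)
            calc (q:ℝ) ^ (m - i) * 2 ^ i ≤ (q:ℝ) ^ (m-i) * (q:ℝ)^i := by gcongr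
              _ = (q:ℝ)^m := by rw [← pow_add]; congr 1; omega
          have hpos : (0:ℝ) < 2 ^ i := by positivity
          calc ((i:ℝ) + 1) ^ 2 * q ^ (m - i)
              = ((i:ℝ)+1)^2 * ((q:ℝ)^(m-i) * 2^i / 2^i) := by field_simp
            _ ≤ ((i:ℝ)+1)^2 * ((q:ℝ)^m / 2^i) := by gcongr
            _ = (q:ℝ)^m * (((i:ℝ) + 1) ^ 2 * (1/2) ^ i) := by
                rw [div_pow, one_pow]; ring
        calc ∑ i ∈ Finset.range m, ((i:ℝ) + 1) ^ 2 * q ^ (m - i)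
            ≤ ∑ i ∈ Finset.range m, (q:ℝ)^m * (((i:ℝ) + 1) ^ 2 * (1/2) ^ i) :=
              Finset.sum_le_sum h5
          _ = (q:ℝ)^m * ∑ i ∈ Finset.range m, ((i:ℝ) + 1) ^ 2 * (1/2) ^ i := by
              rw [Finset.mul_sum]
          _ ≤ (q:ℝ)^m * 12 := by
              gcongr
              rw [sum_sq_half]
              have : (0:ℝ) ≤ (2 * (m:ℝ) ^ 2 + 8 * (m:ℝ) + 12) * (1/2:ℝ) ^ m := by positivity
              linarith
          _ = 12 * (q:ℝ)^m := by ring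

lemma aux_mem_nf {f P : Fq[X]} (hf : f ≠ 0) (hPm : P.Monic) (hirr : Irreducible P)
    (hdvd : P ∣ f) : P ∈ normalizedFactors f := by
  obtain ⟨Q, hQ, hassoc⟩ := exists_mem_normalizedFactors_of_dvd hf hirr hdvd
  have h1 : normalize P = P := hPm.normalize_eq_self
  have h2 : normalize Q = Q := normalize_normalized_factor Q hQ
  have : P = Q := by
    rw [← h1, ← h2]
    exact normalize_eq_normalize hassoc.dvd hassoc.symm.dvd
  rwa [this]

lemma aux_prod_dvd {f : Fq[X]} (hf : f ≠ 0) {t : Finset (Fq[X])}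
    (ht : ∀ P ∈ t, P ∈ normalizedFactors f) : (∏ P ∈ t, P) ∣ f := by
  have hle : t.val ≤ normalizedFactors f := by
    rw [Multiset.le_iff_count]
    intro a
    by_cases ha : a ∈ t
    · have h1 : t.val.count a = 1 := by
        rw [Multiset.count_eq_one_of_mem t.nodup ha]
      rw [h1]
      exact Multiset.one_le_count_iff_mem.mpr (ht a ha)
    · simp [Multiset.count_eq_zero_of_notMem (show a ∉ t.val from ha)]
  calc (∏ P ∈ t, P) = t.val.prod := by
        rw [Finset.prod_eq_multiset_prod]; simp
    _ ∣ (normalizedFactors f).prod := Multiset.prod_dvd_prod_of_le hle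
    _ ∣ f := (prod_normalizedFactors hf).dvd

lemma aux_sum_deg_le {f : Fq[X]} (hf : f ≠ 0) {t : Finset (Fq[X])}
    (ht : ∀ P ∈ t, P ∈ normalizedFactors f) :
    ∑ P ∈ t, P.natDegree ≤ f.natDegree := by
  have h0 : ∀ P ∈ t, P ≠ (0 : Fq[X]) := fun P hP =>
    (prime_of_normalized_factor P (ht P hP)).ne_zero
  rw [← Polynomial.natDegree_prod _ _ h0]
  exact Polynomial.natDegree_le_of_dvd (aux_prod_dvd hf ht) hf

lemma aux_irred_dvd {P : Fq[X]} (hPm : P.Monic) (hirr : Irreducible P) :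
    P ∣ X ^ (Fintype.card Fq ^ P.natDegree) - X := by
  haveI : Fact (Irreducible P) := ⟨hirr⟩
  have hP0 : P ≠ 0 := hPm.ne_zero
  set K := AdjoinRoot P
  letI : Fintype K := Module.fintypeOfFintype (AdjoinRoot.powerBasis hP0).basis
  have hcard : Fintype.card K = Fintype.card Fq ^ P.natDegree := by
    rw [Module.card_fintype (AdjoinRoot.powerBasis hP0).basis]
    simp [AdjoinRoot.powerBasis]
    exact congrArg _ (Fintype.card_fin _)
  have hroot : (AdjoinRoot.root P) ^ (Fintype.card Fq ^ P.natDegree) = AdjoinRoot.root P := by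
    rw [← hcard]
    exact FiniteField.pow_card _
  have haeval : (Polynomial.aeval (AdjoinRoot.root P))
      ((X : Fq[X]) ^ (Fintype.card Fq ^ P.natDegree) - X) = 0 := by
    simp [map_sub, map_pow, Polynomial.aeval_X, hroot]
  have hmin : minpoly Fq (AdjoinRoot.root P) = P := by
    rw [AdjoinRoot.minpoly_root hP0, hPm.leadingCoeff]
    simp
  have h := minpoly.dvd Fq _ haeval
  rwa [hmin] at h

lemma aux_count_deg {d : ℕ} (hd : 1 ≤ d) {t : Finset (Fq[X])}
    (ht : ∀ P ∈ t, P.Monic ∧ Irreducible P ∧ P.natDegree = d) :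
    d * t.card ≤ Fintype.card Fq ^ d := by
  set q := Fintype.card Fq with hqdef
  have hq : 1 < q := Fintype.one_lt_card
  have hq1 : 1 < q ^ d := Nat.one_lt_pow (by omega) hq
  set f : Fq[X] := X ^ (q ^ d) - X with hfdef
  have hfdeg : f.natDegree = q ^ d := FiniteField.X_pow_card_sub_X_natDegree_eq Fq hq1
  have hf0 : f ≠ 0 := FiniteField.X_pow_card_sub_X_ne_zero Fq hq1
  have hmem : ∀ P ∈ t, P ∈ normalizedFactors f := by
    intro P hP
    obtain ⟨hm, hirr, hdeg⟩ := ht P hP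
    have h := aux_irred_dvd hm hirr
    rw [hdeg] at h
    exact aux_mem_nf hf0 hm hirr h
  have := aux_sum_deg_le hf0 hmem
  rw [hfdeg] at this
  calc d * t.card = ∑ P ∈ t, d := by rw [Finset.sum_const, smul_eq_mul, mul_comm]
    _ = ∑ P ∈ t, P.natDegree := Finset.sum_congr rfl (fun P hP => ((ht P hP).2.2).symm)
    _ ≤ q ^ d := this

lemma aux_deg_le {P : Fq[X]} (hPm : P.Monic) (hirr : Irreducible P) {M : ℕ} (hM : 1 ≤ M)
    (hdvd : P ∣ X ^ (Fintype.card Fq ^ M) - X) : P.natDegree ≤ M := by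
  classical
  haveI : Fact (Irreducible P) := ⟨hirr⟩
  have hP0 : P ≠ 0 := hPm.ne_zero
  set q := Fintype.card Fq with hqdef
  have hq : 1 < q := Fintype.one_lt_card
  set K := AdjoinRoot P
  letI : Fintype K := Module.fintypeOfFintype (AdjoinRoot.powerBasis hP0).basis
  have hcard : Fintype.card K = q ^ P.natDegree := by
    rw [Module.card_fintype (AdjoinRoot.powerBasis hP0).basis]
    simp [AdjoinRoot.powerBasis]
    exact congrArg _ (Fintype.card_fin _)
  -- the root satisfies x ^ q^M = x
  set x := AdjoinRoot.root P with hxdef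
  have hxroot : x ^ (q ^ M) = x := by
    have h0 : (Polynomial.aeval x) ((X : Fq[X]) ^ (q ^ M) - X) = 0 := by
      obtain ⟨g, hg⟩ := hdvd
      rw [hg, map_mul, AdjoinRoot.aeval_eq, AdjoinRoot.mk_self, zero_mul]
    simpa [map_sub, map_pow, sub_eq_zero] using h0
  -- characteristic setup
  set p := ringChar Fq with hpdef
  haveI : CharP Fq p := ringChar.charP Fq
  obtain ⟨s, hps, hqs⟩ := FiniteField.card Fq p
  haveI : Fact p.Prime := ⟨hps⟩
  haveI : CharP K p := charP_of_injective_algebraMap (algebraMap Fq K).injective p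
  -- the q^M power map is the identity on K
  have hall : ∀ y : K, y ^ (q ^ M) = y := by
    intro y
    obtain ⟨g, rfl⟩ := AdjoinRoot.mk_surjective y
    set ψ := iterateFrobenius K p ((s : ℕ) * M) with hψdef
    have hψ : ∀ z : K, ψ z = z ^ (q ^ M) := by
      intro z
      rw [hψdef, iterateFrobenius_def, pow_mul, ← hqs]
    have h1 : ψ (AdjoinRoot.mk P g) = AdjoinRoot.mk P g := by
      rw [← AdjoinRoot.aeval_eq, Polynomial.aeval_def, Polynomial.hom_eval₂]
      have hcomp : ψ.comp (algebraMap Fq K) = algebraMap Fq K := by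
        ext a
        rw [RingHom.comp_apply, hψ, ← map_pow, FiniteField.pow_card_pow]
      have hx : ψ x = x := by rw [hψ, hxroot]
      rw [hcomp, hx, ← Polynomial.aeval_def, AdjoinRoot.aeval_eq]
    rw [← hψ, h1]
  -- therefore card K ≤ q ^ M
  have hq1 : 1 < q ^ M := Nat.one_lt_pow (by omega) hq
  set F : K[X] := X ^ (q ^ M) - X with hFdef
  have hFdeg : F.natDegree = q ^ M := FiniteField.X_pow_card_sub_X_natDegree_eq K hq1
  have hF0 : F ≠ 0 := FiniteField.X_pow_card_sub_X_ne_zero K hq1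
  have hsub : (Finset.univ : Finset K) ⊆ F.roots.toFinset := by
    intro y _
    rw [Multiset.mem_toFinset, Polynomial.mem_roots hF0]
    simp [hFdef, Polynomial.IsRoot.def, sub_eq_zero, hall y]
  have hcardle : Fintype.card K ≤ q ^ M := by
    calc Fintype.card K = (Finset.univ : Finset K).card := rfl
      _ ≤ F.roots.toFinset.card := Finset.card_le_card hsub
      _ ≤ Multiset.card F.roots := Multiset.toFinset_card_le _
      _ ≤ F.natDegree := Polynomial.card_roots' F
      _ = q ^ M := hFdeg
  rw [hcard] at hcardle
  exact (Nat.pow_le_pow_iff_right (by omega)).mp hcardle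

lemma aux_main {R : Fq[X]} (hR : R.Monic) {m : ℕ} (hm : 1 ≤ m) :
    (ffOmega R : ℝ) * (m + 1)
      ≤ R.natDegree + 12 * (Fintype.card Fq : ℝ) ^ m / m := by
  classical
  set q := Fintype.card Fq with hqdef
  have hq : 2 ≤ q := Fintype.one_lt_card
  have hR0 : R ≠ 0 := hR.ne_zero
  set S : Finset (Fq[X]) := (normalizedFactors R).toFinset with hSdef
  have hSfacts : ∀ P ∈ S, P.Monic ∧ Irreducible P ∧ 1 ≤ P.natDegree := by
    intro P hP
    rw [hSdef, Multiset.mem_toFinset] at hP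
    have hirr := irreducible_of_normalized_factor P hP
    have hmono : P.Monic := by
      have h := normalize_normalized_factor P hP
      have hP0 : P ≠ 0 := (prime_of_normalized_factor P hP).ne_zero
      rw [← h]
      exact Polynomial.monic_normalize hP0
    refine ⟨hmono, hirr, ?_⟩
    have := hirr.natDegree_pos
    omega
  -- sum of degrees bounded by n
  have hdegsum : ∑ P ∈ S, P.natDegree ≤ R.natDegree := by
    apply aux_sum_deg_le hR0
    intro P hP; rwa [hSdef, Multiset.mem_toFinset] at hP
  -- pointwise : (m+1) ≤ deg P + (if deg P ≤ m then m+1-deg P else 0) over ℝ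
  have hpoint : ∀ P ∈ S, ((m:ℝ) + 1)
      ≤ (P.natDegree : ℝ) + (if P.natDegree ≤ m then ((m:ℝ) + 1 - P.natDegree) else 0) := by
    intro P hP
    by_cases h : P.natDegree ≤ m
    · rw [if_pos h]; ring_nf; rfl
    · rw [if_neg h]
      push_neg at h
      have : (m:ℝ) + 1 ≤ (P.natDegree : ℝ) := by exact_mod_cast h
      linarith
  have hstep1 : (ffOmega R : ℝ) * (m + 1)
      ≤ (∑ P ∈ S, (P.natDegree : ℝ))
        + ∑ P ∈ S, (if P.natDegree ≤ m then ((m:ℝ) + 1 - P.natDegree) else 0) := by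
    have : (ffOmega R : ℝ) * (m + 1) = ∑ P ∈ S, ((m:ℝ) + 1) := by
      rw [Finset.sum_const, nsmul_eq_mul]; rfl
    rw [this, ← Finset.sum_add_distrib]
    exact Finset.sum_le_sum hpoint
  -- second sum: group by degree
  set T : Finset (Fq[X]) := S.filter (fun P => P.natDegree ≤ m) with hTdef
  have hsum2 : ∑ P ∈ S, (if P.natDegree ≤ m then ((m:ℝ) + 1 - P.natDegree) else 0)
      = ∑ P ∈ T, ((m:ℝ) + 1 - P.natDegree) := (Finset.sum_filter _ _).symm
  have hmaps : ∀ P ∈ T, P.natDegree ∈ Finset.Icc 1 m := by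
    intro P hP
    rw [hTdef, Finset.mem_filter] at hP
    rw [Finset.mem_Icc]
    exact ⟨(hSfacts P hP.1).2.2, hP.2⟩
  have hfiber : ∑ P ∈ T, ((m:ℝ) + 1 - P.natDegree)
      = ∑ d ∈ Finset.Icc 1 m, ∑ P ∈ T.filter (fun P => P.natDegree = d),
          ((m:ℝ) + 1 - P.natDegree) :=
    (Finset.sum_fiberwise_of_maps_to hmaps _).symm
  have hinner : ∀ d ∈ Finset.Icc 1 m,
      ∑ P ∈ T.filter (fun P => P.natDegree = d), ((m:ℝ) + 1 - P.natDegree)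
        ≤ ((m:ℝ) + 1 - d) * q ^ d / d := by
    intro d hd
    rw [Finset.mem_Icc] at hd
    have hd0 : (0:ℝ) < d := by exact_mod_cast hd.1
    set t := T.filter (fun P => P.natDegree = d) with htdef
    have hconst : ∀ P ∈ t, ((m:ℝ) + 1 - (P.natDegree:ℝ)) = ((m:ℝ) + 1 - d) := by
      intro P hP
      rw [htdef, Finset.mem_filter] at hP
      rw [hP.2]
    have hteq : ∑ P ∈ t, ((m:ℝ) + 1 - P.natDegree) = t.card * ((m:ℝ) + 1 - d) := by
      rw [Finset.sum_congr rfl hconst, Finset.sum_const, nsmul_eq_mul]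
    rw [hteq]
    have hcount : d * t.card ≤ q ^ d := by
      apply aux_count_deg hd.1
      intro P hP
      rw [htdef, Finset.mem_filter, hTdef, Finset.mem_filter] at hP
      exact ⟨(hSfacts P hP.1.1).1, (hSfacts P hP.1.1).2.1, hP.2⟩
    have hcount' : (d:ℝ) * t.card ≤ (q:ℝ) ^ d := by exact_mod_cast hcount
    have hcardle : (t.card : ℝ) ≤ (q:ℝ)^d / d := by
      rw [le_div_iff₀ hd0]
      linarith [hcount']
    have hnonneg : (0:ℝ) ≤ (m:ℝ) + 1 - d := by
      have : (d:ℝ) ≤ m := by exact_mod_cast hd.2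
      linarith
    calc (t.card : ℝ) * ((m:ℝ) + 1 - d) ≤ ((q:ℝ)^d / d) * ((m:ℝ) + 1 - d) := by
          exact mul_le_mul_of_nonneg_right hcardle hnonneg
      _ = ((m:ℝ) + 1 - d) * q ^ d / d := by ring
  have hdeg' : (∑ P ∈ S, (P.natDegree : ℝ)) ≤ (R.natDegree : ℝ) := by
    rw [← Nat.cast_sum]
    exact_mod_cast hdegsum
  calc (ffOmega R : ℝ) * (m + 1)
      ≤ (∑ P ∈ S, (P.natDegree : ℝ))
        + ∑ P ∈ S, (if P.natDegree ≤ m then ((m:ℝ) + 1 - P.natDegree) else 0) := hstep1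
    _ ≤ (R.natDegree : ℝ) + ∑ d ∈ Finset.Icc 1 m, ((m:ℝ) + 1 - d) * q ^ d / d := by
        rw [hsum2, hfiber]
        exact add_le_add hdeg' (Finset.sum_le_sum hinner)
    _ ≤ (R.natDegree : ℝ) + 12 * (q:ℝ) ^ m / m := by
        exact add_le_add_right (sum_est hq hm) _

lemma aux_lower (m : ℕ) (hm : 1 ≤ m) :
    ∃ R : Polynomial Fq, R.Monic ∧ R.natDegree = Fintype.card Fq ^ m ∧
      Fintype.card Fq ^ m ≤ (ffOmega R) * m := by
  classical
  set q := Fintype.card Fq with hqdef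
  have hq : 1 < q := Fintype.one_lt_card
  have hq1 : 1 < q ^ m := Nat.one_lt_pow (by omega) hq
  set R : Fq[X] := X ^ (q ^ m) - X with hRdef
  have hdeg : R.natDegree = q ^ m := FiniteField.X_pow_card_sub_X_natDegree_eq Fq hq1
  have hR0 : R ≠ 0 := FiniteField.X_pow_card_sub_X_ne_zero Fq hq1
  have hmonic : R.Monic := by
    apply Polynomial.monic_X_pow_sub
    rw [Polynomial.degree_X]
    exact_mod_cast hq1
  -- separable hence squarefree
  have hderiv : Polynomial.derivative R = -1 := by
    rw [hRdef]
    rw [Polynomial.derivative_sub, Polynomial.derivative_X_pow, Polynomial.derivative_X]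
    have h1 : ((q : ℕ) : Fq) = 0 := FiniteField.cast_card_eq_zero Fq
    have hcast : ((q ^ m : ℕ) : Fq) = 0 := by
      push_cast
      rw [h1]
      exact zero_pow (by omega)
    rw [hcast]
    simp
  have hsep : R.Separable := by
    rw [Polynomial.separable_def, hderiv]
    exact ⟨0, -1, by ring⟩
  have hsqf : Squarefree R := hsep.squarefree
  have hnodup : (normalizedFactors R).Nodup :=
    (squarefree_iff_nodup_normalizedFactors hR0).mp hsqf
  set S : Finset (Fq[X]) := (normalizedFactors R).toFinset with hSdef
  have hval : S.val = normalizedFactors R := by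
    rw [hSdef, Multiset.toFinset_val, Multiset.dedup_eq_self.mpr hnodup]
  -- sum of degrees over S equals natDegree R
  have hzero : (0 : Fq[X]) ∉ normalizedFactors R := zero_notMem_normalizedFactors R
  have hproddeg : ((normalizedFactors R).map Polynomial.natDegree).sum = q ^ m := by
    rw [← Polynomial.natDegree_multiset_prod _ hzero]
    obtain ⟨u, hu⟩ := (prod_normalizedFactors hR0)
    have hu0 : (u : Fq[X]) ≠ 0 := Units.ne_zero u
    have hprod0 : (normalizedFactors R).prod ≠ 0 := by
      intro h
      rw [h, zero_mul] at hu
      exact hR0 hu.symm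
    have := Polynomial.natDegree_mul hprod0 hu0
    rw [hu] at this
    rw [hdeg] at this
    rw [Polynomial.natDegree_eq_zero_of_isUnit u.isUnit] at this
    omega
  have hsum : ∑ P ∈ S, P.natDegree = q ^ m := by
    rw [← hproddeg, Finset.sum, hval]
  -- each factor has degree ≤ m
  have hdegle : ∀ P ∈ S, P.natDegree ≤ m := by
    intro P hP
    rw [hSdef, Multiset.mem_toFinset] at hP
    have hirr := irreducible_of_normalized_factor P hP
    have hP0 : P ≠ 0 := (prime_of_normalized_factor P hP).ne_zero
    have hPm : P.Monic := by
      have h := normalize_normalized_factor P hP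
      rw [← h]
      exact Polynomial.monic_normalize hP0
    exact aux_deg_le hPm hirr hm (dvd_of_mem_normalizedFactors hP)
  refine ⟨R, hmonic, hdeg, ?_⟩
  calc q ^ m = ∑ P ∈ S, P.natDegree := hsum.symm
    _ ≤ ∑ P ∈ S, m := Finset.sum_le_sum hdegle
    _ = (ffOmega R) * m := by rw [Finset.sum_const, smul_eq_mul]; rfl

end AuxOmega

/-- `limsup_{deg R → ∞, R monic} ω(R)·(log_q log_q |R|)/(log_q |R|) = 1`
(note `log_q |R| = deg R`), together with the bound
`ω(R) ≤ (deg R)/(log_q deg R) + O((deg R)/(log_q deg R)²)` for `deg R ≥ 4`. -/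
theorem omega_limsup_eq_one {Fq : Type*} [Field Fq] [Fintype Fq] :
    (∀ ε : ℝ, 0 < ε → ∃ D : ℕ, ∀ R : Polynomial Fq, R.Monic → D ≤ R.natDegree →
        (ffOmega R : ℝ) * Real.logb (Fintype.card Fq) (R.natDegree) / R.natDegree ≤ 1 + ε)
    ∧ (∀ ε : ℝ, 0 < ε → ∀ D : ℕ, ∃ R : Polynomial Fq, R.Monic ∧ D ≤ R.natDegree ∧
        1 - ε ≤ (ffOmega R : ℝ) * Real.logb (Fintype.card Fq) (R.natDegree) / R.natDegree)
    ∧ ∃ C : ℝ, ∀ R : Polynomial Fq, R.Monic → 4 ≤ R.natDegree →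
        (ffOmega R : ℝ)
          ≤ (R.natDegree : ℝ) / Real.logb (Fintype.card Fq) (R.natDegree)
            + C * R.natDegree / (Real.logb (Fintype.card Fq) (R.natDegree)) ^ 2 := by
  classical
  set q := Fintype.card Fq with hqdef
  have hq : 2 ≤ q := Fintype.one_lt_card
  have hq1R : (1:ℝ) < q := by exact_mod_cast hq
  have hq0R : (0:ℝ) < q := by linarith
  -- Part 3
  have part3 : ∀ R : Polynomial Fq, R.Monic → 4 ≤ R.natDegree →
      (ffOmega R : ℝ)
        ≤ (R.natDegree : ℝ) / Real.logb q (R.natDegree)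
          + (12 * q) * R.natDegree / (Real.logb q (R.natDegree)) ^ 2 := by
    intro R hR hn4
    set n := R.natDegree with hndef
    have hn1R : (1:ℝ) < n := by
      have : (4:ℝ) ≤ n := by exact_mod_cast hn4
      linarith
    have hn0R : (0:ℝ) < n := by linarith
    set L := Real.logb q n with hLdef
    have hL : 0 < L := Real.logb_pos hq1R hn1R
    set m := ⌈L⌉₊ with hmdef
    have hm1 : 1 ≤ m := Nat.one_le_ceil_iff.mpr hL
    have hmL : L ≤ m := Nat.le_ceil L
    have hmL1 : (m:ℝ) < L + 1 := Nat.ceil_lt_add_one hL.le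
    have hm0R : (0:ℝ) < m := by exact_mod_cast hm1
    have hqm : (q:ℝ)^m ≤ q * n := by
      have h1 : (q:ℝ)^(m:ℕ) = (q:ℝ)^((m:ℕ):ℝ) := (Real.rpow_natCast _ _).symm
      have h2 : (q:ℝ)^((m:ℕ):ℝ) ≤ (q:ℝ)^(L+1) :=
        Real.rpow_le_rpow_of_exponent_le hq1R.le hmL1.le
      have h3 : (q:ℝ)^(L+1) = (q:ℝ)^L * q := by
        rw [Real.rpow_add hq0R, Real.rpow_one]
      have h4 : (q:ℝ)^L = n := Real.rpow_logb hq0R (by linarith) hn0R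
      rw [h1]
      rw [h3, h4] at h2
      linarith
    have main := aux_main (Fq := Fq) hR hm1
    rw [← hqdef, ← hndef] at main
    have hstep : (ffOmega R : ℝ) * (m + 1) ≤ n + 12 * (q * n) / m := by
      refine main.trans (add_le_add_right ?_ _)
      gcongr
    have h5 : (ffOmega R : ℝ) ≤ (n + 12 * (q * n) / m) / (m + 1) := by
      rw [le_div_iff₀ (by positivity)]
      exact hstep
    have h6 : ((n:ℝ) + 12 * (q * n) / m) / (m + 1)
        = n / (m + 1) + (12 * q) * n / (m * (m + 1)) := by
      field_simp
    rw [h6] at h5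
    refine h5.trans (add_le_add ?_ ?_)
    · gcongr
      linarith
    · gcongr
      nlinarith
  refine ⟨?_, ?_, ⟨12 * q, part3⟩⟩
  -- Part 1
  · intro ε hε
    set C : ℝ := 12 * q with hCdef
    have hC : 0 < C := by positivity
    refine ⟨max 4 (⌈(q:ℝ) ^ ((C/ε : ℝ))⌉₊ + 1), ?_⟩
    intro R hR hD
    have hn4 : 4 ≤ R.natDegree := le_trans (le_max_left _ _) hD
    set n := R.natDegree with hndef
    have hn0R : (0:ℝ) < n := by
      have : (4:ℝ) ≤ n := by exact_mod_cast hn4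
      linarith
    set L := Real.logb q n with hLdef
    have hn1R : (1:ℝ) < n := by
      have : (4:ℝ) ≤ n := by exact_mod_cast hn4
      linarith
    have hL : 0 < L := Real.logb_pos hq1R hn1R
    have hLC : C / ε ≤ L := by
      rw [hLdef]
      rw [Real.le_logb_iff_rpow_le hq1R hn0R]
      calc (q:ℝ) ^ (C/ε) ≤ (⌈(q:ℝ) ^ ((C/ε : ℝ))⌉₊ : ℝ) := Nat.le_ceil _
        _ ≤ n := by
          have h1 : ⌈(q:ℝ) ^ ((C/ε : ℝ))⌉₊ + 1 ≤ n := le_trans (le_max_right _ _) hD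
          have : (⌈(q:ℝ) ^ ((C/ε : ℝ))⌉₊ : ℝ) + 1 ≤ n := by exact_mod_cast h1
          linarith
    have hCL : C / L ≤ ε := by
      rw [div_le_iff₀ hL]
      rw [div_le_iff₀ hε] at hLC
      linarith [hLC]
    have hk := part3 R hR hn4
    rw [← hndef, ← hLdef] at hk
    have h7 : (ffOmega R : ℝ) * L / n ≤ (n / L + C * n / L^2) * L / n := by
      gcongr
    refine h7.trans ?_
    have h8 : ((n:ℝ) / L + C * n / L^2) * L / n = 1 + C / L := by
      field_simp
    rw [h8]
    linarith
  -- Part 2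
  · intro ε hε D
    obtain ⟨R, hmon, hdeg, hcount⟩ := aux_lower (Fq := Fq) (D+1) (by omega)
    rw [← hqdef] at hdeg hcount
    refine ⟨R, hmon, ?_, ?_⟩
    · rw [hdeg]
      calc D ≤ 2 ^ D := Nat.le_of_lt (Nat.lt_two_pow_self (n := D))
        _ ≤ 2 ^ (D+1) := Nat.pow_le_pow_right (by omega) (by omega)
        _ ≤ q ^ (D+1) := Nat.pow_le_pow_left hq _
    · have hlogb : Real.logb q ((R.natDegree : ℕ) : ℝ) = ((D:ℝ)+1) := by
        rw [hdeg]
        push_cast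
        rw [Real.logb_pow, Real.logb_self_eq_one hq1R]
        push_cast
        ring
      rw [hlogb]
      have hq0 : (0:ℝ) < (q:ℝ) ^ (D+1) := by positivity
      have hdegR : ((R.natDegree : ℕ) : ℝ) = (q:ℝ) ^ (D+1) := by
        rw [hdeg]; push_cast; ring
      rw [hdegR]
      have hge : (q:ℝ) ^ (D+1) ≤ (ffOmega R : ℝ) * ((D:ℝ)+1) := by
        exact_mod_cast hcount
      have h9 : (1:ℝ) ≤ (ffOmega R : ℝ) * ((D:ℝ)+1) / (q:ℝ)^(D+1) := by
        rw [le_div_iff₀ hq0]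
        linarith
      linarith
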